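/- Let μ be a compactly supported finite Borel measure on ℝ³ and γ : I → S² continuous on a compact interval I. Then the set {θ ∈ I : ρ_{θ#}μ is not absolutely continuous with respect to ℋ¹} is Borel measurable, where ρ_θ is orthogonal projection onto the span of γ(θ). -/

import Mathlib

open MeasureTheory Metric Set Filter
open scoped ENNReal NNReal RealInnerProductSpace Topology

noncomputable section

abbrev E3 : Type := EuclideanSpace ℝ (Fin 3)

/-- Cross product of two vectors in `ℝ³`. -/
def cross3 (u v : E3) : E3 :=
  WithLp.toLp 2 ![u 1 * v 2 - u 2 * v 1, u 2 * v 0 - u 0 * v 2, u 0 * v 1 - u 1 * v 0]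

/-- Scalar triple product `det(u, v, w)`. -/
def det3 (u v w : E3) : ℝ := ⟪u, cross3 v w⟫

/-- A finite measure on `ℝ` is absolutely continuous w.r.t. Lebesgue measure iff the
integral of its Radon–Nikodym derivative is the full mass. -/
lemma aux_ac_iff_lintegral (σ : Measure ℝ) [IsFiniteMeasure σ] :
    σ ≪ (volume : Measure ℝ) ↔ ∫⁻ t, σ.rnDeriv volume t = σ Set.univ := by
  constructor
  · exact fun h => Measure.lintegral_rnDeriv h
  · intro h
    rw [← Measure.singularPart_eq_zero, ← Measure.measure_univ_eq_zero]
    have hdec := σ.haveLebesgueDecomposition_add (volume : Measure ℝ)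
    have := congrArg (fun m : Measure ℝ => m Set.univ) hdec
    simp only [Measure.add_apply, withDensity_apply _ MeasurableSet.univ,
      setLIntegral_univ, h] at this
    have hfin : σ Set.univ ≠ ∞ := measure_ne_top σ _
    nth_rewrite 1 [show σ Set.univ = 0 + σ Set.univ by rw [zero_add]] at this
    exact ((ENNReal.add_left_inj hfin).1 this).symm

/-- Besicovitch differentiation along the sequence of radii `1/(n+1)`. -/
lemma aux_limsup_eq_rnDeriv (σ : Measure ℝ) [IsFiniteMeasure σ] :
    ∀ᵐ t ∂(volume : Measure ℝ),
      limsup (fun n : ℕ => σ (closedBall t (1/((n:ℝ)+1))) /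
        volume (closedBall t (1/((n:ℝ)+1)))) atTop = σ.rnDeriv volume t := by
  have hseq : Tendsto (fun n : ℕ => 1/((n:ℝ)+1)) atTop (𝓝[>] (0:ℝ)) := by
    refine tendsto_nhdsWithin_iff.2 ⟨tendsto_one_div_add_atTop_nhds_zero_nat, ?_⟩
    exact Eventually.of_forall fun n => mem_Ioi.2 (by positivity)
  filter_upwards [Besicovitch.ae_tendsto_rnDeriv σ volume] with t ht
  exact (ht.comp hseq).limsup_eq

/-- Absolute continuity of the projection onto the line spanned by a unit vector `v`
w.r.t. `ℋ¹` is equivalent to absolute continuity of the scalar projection w.r.t.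
Lebesgue measure on `ℝ`. -/
lemma aux_proj_ac_iff {v : E3} (hv : ‖v‖ = 1) (μ : Measure E3) [IsFiniteMeasure μ] :
    Measure.map (fun x : E3 => ⟪x, v⟫ • v) μ ≪ μH[1] ↔
      Measure.map (fun x : E3 => ⟪x, v⟫) μ ≪ (volume : Measure ℝ) := by
  have hf : Measurable fun x : E3 => ⟪x, v⟫ :=
    (continuous_id.inner continuous_const).measurable
  set ι : ℝ → E3 := fun t => t • v with hιdef
  have hι : Isometry ι := by
    refine Isometry.of_dist_eq fun s t => ?_
    simp [hιdef, dist_eq_norm, ← sub_smul, norm_smul, hv]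
  have hemb : MeasurableEmbedding ι := hι.isClosedEmbedding.measurableEmbedding
  have hmap : Measure.map (fun x : E3 => ⟪x, v⟫ • v) μ
      = Measure.map ι (Measure.map (fun x : E3 => ⟪x, v⟫) μ) :=
    (Measure.map_map hι.continuous.measurable hf).symm
  have himg : ∀ s : Set ℝ, μH[1] (ι '' s) = volume s := fun s => by
    rw [hι.hausdorffMeasure_image (Or.inl zero_le_one), MeasureTheory.hausdorffMeasure_real]
  rw [hmap]
  constructor
  · intro h
    refine Measure.AbsolutelyContinuous.mk fun s hs hvol => ?_
    have h1 : μH[1] (ι '' s) = 0 := by rw [himg, hvol]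
    have h2 := h h1
    rwa [hemb.map_apply, hι.injective.preimage_image] at h2
  · intro h
    refine Measure.AbsolutelyContinuous.mk fun s hs hH => ?_
    rw [hemb.map_apply]
    refine h ?_
    have : volume (ι ⁻¹' s) = μH[1] (ι '' (ι ⁻¹' s)) := (himg _).symm
    rw [this]
    exact le_antisymm (le_trans (measure_mono (image_preimage_subset _ _)) hH.le) zero_le

/-- For a compactly supported finite Borel measure `μ` on `ℝ³` and a continuous
`γ : I → S²` on a compact interval, the set of `θ ∈ I` where `ρ_{θ#}μ` fails to be
absolutely continuous with respect to `ℋ¹` is Borel measurable. -/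
theorem stmt5 (a b : ℝ) (hab : a ≤ b) (γ : ℝ → E3)
    (hγ : ContinuousOn γ (Icc a b))
    (hsphere : ∀ θ ∈ Icc a b, ‖γ θ‖ = 1)
    (μ : Measure E3) [IsFiniteMeasure μ]
    (hcompact : ∃ K : Set E3, IsCompact K ∧ μ Kᶜ = 0) :
    MeasurableSet {θ ∈ Icc a b |
      ¬ Measure.map (fun x : E3 => ⟪x, γ θ⟫ • γ θ) μ ≪ μH[1]} := by
  classical
  -- continuous extension of `γ` to all of `ℝ`
  set γ' : ℝ → E3 := fun θ => γ (min b (max a θ)) with hγ'def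
  have hclamp : ∀ θ, min b (max a θ) ∈ Icc a b := fun θ =>
    ⟨le_min hab (le_max_left a θ), min_le_left b _⟩
  have hγ'c : Continuous γ' :=
    hγ.comp_continuous (continuous_const.min (continuous_const.max continuous_id)) hclamp
  have hγ'eq : ∀ θ ∈ Icc a b, γ' θ = γ θ := fun θ hθ => by
    simp [hγ'def, max_eq_right hθ.1, min_eq_right hθ.2]
  -- masses of closed balls under the scalar projections
  set m : ℕ → ℝ × ℝ → ℝ≥0∞ := fun n p =>
    μ ((fun x : E3 => ⟪x, γ' p.1⟫) ⁻¹' closedBall p.2 (1/((n:ℝ)+1))) with hmdef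
  have hm : ∀ n, Measurable (m n) := by
    intro n
    have hcl : IsClosed {q : (ℝ × ℝ) × E3 |
        ⟪q.2, γ' q.1.1⟫ ∈ closedBall q.1.2 (1/((n:ℝ)+1))} := by
      simp only [mem_closedBall]
      refine isClosed_le ?_ continuous_const
      exact (continuous_snd.inner (hγ'c.comp continuous_fst.fst)).dist continuous_fst.snd
    have := measurable_measure_prodMk_left (ν := μ) hcl.measurableSet
    exact this
  set F : ℝ × ℝ → ℝ≥0∞ := fun p =>
    limsup (fun n : ℕ => m n p / volume (closedBall p.2 (1/((n:ℝ)+1)))) atTop with hFdef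
  have hF : Measurable F := by
    refine Measurable.limsup fun n => (hm n).div ?_
    simp only [Real.volume_closedBall]
    exact measurable_const
  set H : ℝ → ℝ≥0∞ := fun θ => ∫⁻ t, F (θ, t) with hHdef
  have hH : Measurable H := hF.lintegral_prod_right'
  -- pointwise characterization on `Icc a b`
  have key : ∀ θ ∈ Icc a b,
      ((¬ Measure.map (fun x : E3 => ⟪x, γ θ⟫ • γ θ) μ ≪ μH[1]) ↔ H θ ≠ μ Set.univ) := by
    intro θ hθ
    have hv : ‖γ θ‖ = 1 := hsphere θ hθ
    have hγθ : γ' θ = γ θ := hγ'eq θ hθ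
    have hfmeas : Measurable fun x : E3 => ⟪x, γ θ⟫ :=
      (continuous_id.inner continuous_const).measurable
    set σ : Measure ℝ := Measure.map (fun x : E3 => ⟪x, γ θ⟫) μ with hσdef
    haveI hσfin : IsFiniteMeasure σ := by
      constructor
      rw [hσdef, Measure.map_apply hfmeas MeasurableSet.univ]
      exact measure_lt_top μ _
    have hσball : ∀ (n : ℕ) (t : ℝ), m n (θ, t) = σ (closedBall t (1/((n:ℝ)+1))) := by
      intro n t
      rw [hσdef, Measure.map_apply hfmeas measurableSet_closedBall, hmdef]
      simp only [hγθ]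
    have hHθ : H θ = ∫⁻ t, σ.rnDeriv volume t := by
      rw [hHdef]
      refine lintegral_congr_ae ?_
      filter_upwards [aux_limsup_eq_rnDeriv σ] with t ht
      calc F (θ, t)
          = limsup (fun n : ℕ => σ (closedBall t (1/((n:ℝ)+1))) /
              volume (closedBall t (1/((n:ℝ)+1)))) atTop := by
            simp only [hFdef]
            congr 1
            funext n
            rw [hσball n t]
        _ = σ.rnDeriv volume t := ht
    have huniv : σ Set.univ = μ Set.univ := by
      rw [hσdef, Measure.map_apply hfmeas MeasurableSet.univ, preimage_univ]
    rw [aux_proj_ac_iff hv μ, ← hσdef, aux_ac_iff_lintegral σ, ← hHθ, huniv]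
  have hset : {θ ∈ Icc a b |
      ¬ Measure.map (fun x : E3 => ⟪x, γ θ⟫ • γ θ) μ ≪ μH[1]}
      = Icc a b ∩ H ⁻¹' ({μ Set.univ}ᶜ) := by
    ext θ
    simp only [mem_setOf_eq, mem_inter_iff, mem_preimage, mem_compl_iff, mem_singleton_iff]
    constructor
    · rintro ⟨hθ, h⟩; exact ⟨hθ, (key θ hθ).1 h⟩
    · rintro ⟨hθ, h⟩; exact ⟨hθ, (key θ hθ).2 h⟩
  rw [hset]
  exact measurableSet_Icc.inter (hH (measurableSet_singleton _).compl)
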